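/- Let A be a subset of {1, …, N} with |A| ≥ 1, and let k be an integer with 1 ≤ k ≤ |A|. Suppose given entire functions s_{j,B'} on ℂᴺ, indexed by j ∈ A and (k−1)-element subsets B' of A∖{j}, such that Σ_{B ∈ (A choose k)} (Π_{ℓ ∈ B} z_ℓ) · (Σ_{j ∈ B} s_{j, B∖{j}}(z)) = 0 for all z ∈ ℂᴺ. Then there exist entire functions s'_{i,B} on ℂᴺ, indexed by i ∈ A and k-element subsets B of A∖{i}, such that for every k-element subset B of A and every z ∈ ℂᴺ, Σ_{j ∈ B} s_{j, B∖{j}}(z) = Σ_{i ∈ A∖B} z_i · s'_{i,B}(z). -/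

import Mathlib

open Function
open scoped NNReal ENNReal

namespace Stmt5Aux

variable {N : ℕ}

/-- basis vector -/
noncomputable def ee (i : Fin N) : Fin N → ℂ := Pi.single i 1

/-- projection zeroing out coordinate i -/
def pz (i : Fin N) (z : Fin N → ℂ) : Fin N → ℂ := Function.update z i 0

lemma pz_add (i : Fin N) (x y : Fin N → ℂ) : pz i (x + y) = pz i x + pz i y := by
  funext j; by_cases h : j = i <;> simp [pz, Function.update_apply, h]

lemma pz_smul (i : Fin N) (c : ℂ) (x : Fin N → ℂ) : pz i (c • x) = c • pz i x := by
  funext j; by_cases h : j = i <;> simp [pz, Function.update_apply, h]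

lemma norm_pz_le (i : Fin N) (x : Fin N → ℂ) : ‖pz i x‖ ≤ ‖x‖ := by
  refine (pi_norm_le_iff_of_nonneg (norm_nonneg x)).2 fun j => ?_
  by_cases h : j = i
  · subst h; simp [pz]
  · simp only [pz, Function.update_apply, h, if_false]
    exact norm_le_pi_norm x j

lemma norm_ee_le (i : Fin N) : ‖ee i‖ ≤ 1 := by
  refine (pi_norm_le_iff_of_nonneg zero_le_one).2 fun j => ?_
  by_cases h : j = i <;> simp [ee, Pi.single_apply, h]

lemma sub_pz (i : Fin N) (y : Fin N → ℂ) : y - pz i y = y i • ee i := by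
  funext j; by_cases h : j = i
  · subst h; simp [pz, ee]
  · simp [pz, ee, Function.update_apply, h, Pi.single_apply]

lemma update_eq_pz_add (i : Fin N) (z : Fin N → ℂ) (w : ℂ) :
    Function.update z i w = pz i z + w • ee i := by
  funext j; by_cases h : j = i
  · subst h; simp [pz, ee]
  · simp [pz, ee, Function.update_apply, h, Pi.single_apply]

lemma norm_update_le (i : Fin N) (v : Fin N → ℂ) (w : ℂ) :
    ‖Function.update v i w‖ ≤ ‖v‖ + ‖w‖ := by
  refine (pi_norm_le_iff_of_nonneg (by positivity)).2 fun j => ?_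
  by_cases h : j = i
  · subst h; simp only [Function.update_self]
    exact le_add_of_nonneg_left (norm_nonneg v)
  · simp only [Function.update_apply, h, if_false]
    exact le_add_of_le_of_nonneg (norm_le_pi_norm v j) (norm_nonneg w)

/-- insertNth commutes with updating one of the remaining coordinates -/
lemma insertNth_update {α : Type*} {m : ℕ} [DecidableEq (Fin m)] (t : Fin (m+1)) (x : α)
    (f : Fin m → α) (j : Fin m) (v : α) :
    t.insertNth x (Function.update f j v)
      = Function.update (t.insertNth x f : Fin (m+1) → α) (t.succAbove j) v := by
  ext s
  rcases eq_or_ne s t with h | hne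
  swap
  · obtain ⟨j', rfl⟩ := Fin.exists_succAbove_eq hne
    rw [Fin.insertNth_apply_succAbove]
    by_cases h : j' = j
    · subst h; simp
    · rw [Function.update_of_ne h, Function.update_of_ne
        (fun hc => h (Fin.succAbove_right_injective hc)), Fin.insertNth_apply_succAbove]
  · rw [h, Fin.insertNth_apply_same, Function.update_of_ne (Fin.succAbove_ne t j).symm,
      Fin.insertNth_apply_same]

lemma succAbove_coe_lt {m : ℕ} (t : Fin (m+1)) (j : Fin m) :
    (((t.succAbove j) : Fin (m+1)) : ℕ) < (t : ℕ) ↔ (j : ℕ) < (t : ℕ) := by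
  rcases lt_or_ge ((j : ℕ)) ((t : ℕ)) with h | h
  · rw [Fin.succAbove_of_castSucc_lt t j (by simpa [Fin.lt_iff_val_lt_val])]
    simpa using h
  · rw [Fin.succAbove_of_le_castSucc t j (by simpa [Fin.le_iff_val_le_val])]
    simp only [Fin.val_succ]
    omega

lemma succAbove_coe_lt_succ {m : ℕ} (t : Fin (m+1)) (j : Fin m) :
    (((t.succAbove j) : Fin (m+1)) : ℕ) < (t : ℕ) + 1 ↔ (j : ℕ) < (t : ℕ) := by
  rcases lt_or_ge ((j : ℕ)) ((t : ℕ)) with h | h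
  · rw [Fin.succAbove_of_castSucc_lt t j (by simpa [Fin.lt_iff_val_lt_val])]
    simp only [Fin.coe_castSucc]
    omega
  · rw [Fin.succAbove_of_le_castSucc t j (by simpa [Fin.le_iff_val_le_val])]
    simp only [Fin.val_succ]
    omega


/-- The `t`-th telescoping term, as a multilinear map. -/
noncomputable def termML (i : Fin N) (p : FormalMultilinearSeries ℂ (Fin N → ℂ) ℂ) (m : ℕ)
    (t : Fin (m+1)) : MultilinearMap ℂ (fun _ : Fin m => (Fin N → ℂ)) ℂ where
  toFun u := p (m+1) (t.insertNth (ee i) fun j => if (j : ℕ) < (t : ℕ) then pz i (u j) else u j)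
  map_update_add' := by
    intro dec u j x y
    have key : ∀ v : Fin N → ℂ,
        (fun j' : Fin m => if (j' : ℕ) < (t : ℕ) then pz i (Function.update u j v j')
            else Function.update u j v j')
          = Function.update (fun j' : Fin m => if (j' : ℕ) < (t : ℕ) then pz i (u j') else u j') j
              (if (j : ℕ) < (t : ℕ) then pz i v else v) := by
      intro v; funext j'
      by_cases h : j' = j
      · subst h; simp
      · simp [Function.update_of_ne h]
    simp only [key]
    rw [insertNth_update, insertNth_update, insertNth_update]
    have hsplit : (if (j : ℕ) < (t : ℕ) then pz i (x + y) else x + y)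
        = (if (j : ℕ) < (t : ℕ) then pz i x else x) + (if (j : ℕ) < (t : ℕ) then pz i y else y) := by
      split
      · exact pz_add i x y
      · rfl
    rw [hsplit]
    exact (p (m+1)).map_update_add _ _ _ _
  map_update_smul' := by
    intro dec u j c x
    have key : ∀ v : Fin N → ℂ,
        (fun j' : Fin m => if (j' : ℕ) < (t : ℕ) then pz i (Function.update u j v j')
            else Function.update u j v j')
          = Function.update (fun j' : Fin m => if (j' : ℕ) < (t : ℕ) then pz i (u j') else u j') j
              (if (j : ℕ) < (t : ℕ) then pz i v else v) := by
      intro v; funext j'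
      by_cases h : j' = j
      · subst h; simp
      · simp [Function.update_of_ne h]
    simp only [key]
    rw [insertNth_update, insertNth_update]
    have hsplit : (if (j : ℕ) < (t : ℕ) then pz i (c • x) else c • x)
        = c • (if (j : ℕ) < (t : ℕ) then pz i x else x) := by
      split
      · exact pz_smul i c x
      · rfl
    rw [hsplit]
    exact (p (m+1)).map_update_smul _ _ _ _

lemma termML_bound (i : Fin N) (p : FormalMultilinearSeries ℂ (Fin N → ℂ) ℂ) (m : ℕ)
    (t : Fin (m+1)) (u : Fin m → (Fin N → ℂ)) :
    ‖termML i p m t u‖ ≤ ‖p (m+1)‖ * ∏ j, ‖u j‖ := by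
  refine ((p (m+1)).le_opNorm _).trans ?_
  refine mul_le_mul_of_nonneg_left ?_ (norm_nonneg _)
  set a : Fin (m+1) → (Fin N → ℂ) :=
    t.insertNth (ee i) (fun j : Fin m => if (j : ℕ) < (t : ℕ) then pz i (u j) else u j) with ha
  have hprod : (∏ s : Fin (m+1), ‖a s‖)
      = ‖ee i‖ * ∏ j : Fin m, ‖if (j : ℕ) < (t : ℕ) then pz i (u j) else u j‖ := by
    rw [Fin.prod_univ_succAbove (fun s => ‖a s‖) t]
    simp [ha, Fin.insertNth_apply_same, Fin.insertNth_apply_succAbove]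
  rw [hprod]
  have h2 : (∏ j : Fin m, ‖if (j : ℕ) < (t : ℕ) then pz i (u j) else u j‖) ≤ ∏ j, ‖u j‖ := by
    refine Finset.prod_le_prod (fun j _ => norm_nonneg _) (fun j _ => ?_)
    split
    · exact norm_pz_le i (u j)
    · exact le_rfl
  calc ‖ee i‖ * ∏ j : Fin m, ‖if (j : ℕ) < (t : ℕ) then pz i (u j) else u j‖
      ≤ 1 * ∏ j, ‖u j‖ := by
        refine mul_le_mul (norm_ee_le i) h2 (Finset.prod_nonneg fun j _ => norm_nonneg _)
          zero_le_one
    _ = ∏ j, ‖u j‖ := one_mul _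

/-- The divided power series. -/
noncomputable def qm (i : Fin N) (p : FormalMultilinearSeries ℂ (Fin N → ℂ) ℂ) (m : ℕ) :
    ContinuousMultilinearMap ℂ (fun _ : Fin m => (Fin N → ℂ)) ℂ :=
  ∑ t : Fin (m+1), (termML i p m t).mkContinuous ‖p (m+1)‖ (termML_bound i p m t)

lemma qm_norm (i : Fin N) (p : FormalMultilinearSeries ℂ (Fin N → ℂ) ℂ) (m : ℕ) :
    ‖qm i p m‖ ≤ (m+1) * ‖p (m+1)‖ := by
  refine (norm_sum_le _ _).trans ?_
  have : ∀ t : Fin (m+1),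
      ‖(termML i p m t).mkContinuous ‖p (m+1)‖ (termML_bound i p m t)‖ ≤ ‖p (m+1)‖ :=
    fun t => (termML i p m t).mkContinuous_norm_le (norm_nonneg _) _
  calc (∑ t : Fin (m+1), ‖(termML i p m t).mkContinuous ‖p (m+1)‖ (termML_bound i p m t)‖)
      ≤ ∑ _t : Fin (m+1), ‖p (m+1)‖ := Finset.sum_le_sum (fun t _ => this t)
    _ = (m+1) * ‖p (m+1)‖ := by simp [Finset.sum_const, mul_comm]

lemma qm_apply (i : Fin N) (p : FormalMultilinearSeries ℂ (Fin N → ℂ) ℂ) (m : ℕ)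
    (u : Fin m → (Fin N → ℂ)) :
    qm i p m u = ∑ t : Fin (m+1),
      p (m+1) (t.insertNth (ee i) fun j : Fin m =>
        if (j : ℕ) < (t : ℕ) then pz i (u j) else u j) := by
  rw [qm, ContinuousMultilinearMap.sum_apply]
  rfl

lemma qm_diag (i : Fin N) (p : FormalMultilinearSeries ℂ (Fin N → ℂ) ℂ) (m : ℕ)
    (y : Fin N → ℂ) :
    y i * qm i p m (fun _ => y)
      = (p (m+1) fun _ => y) - (p (m+1) fun _ => pz i y) := by
  set c : ℕ → ℂ := fun n => p (m+1) (fun s : Fin (m+1) => if (s : ℕ) < n then pz i y else y)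
    with hc
  have hc0 : c 0 = p (m+1) (fun _ => y) := by simp [hc]
  have hcend : c (m+1) = p (m+1) (fun _ => pz i y) := by
    simp only [hc]
    congr 1
    funext s
    simp [s.is_lt]
  have step : ∀ t : Fin (m+1),
      y i * p (m+1) (t.insertNth (ee i) fun j : Fin m =>
          if (j : ℕ) < (t : ℕ) then pz i y else y)
        = c (t : ℕ) - c ((t : ℕ) + 1) := by
    intro t
    set g : Fin m → (Fin N → ℂ) := fun j => if (j : ℕ) < (t : ℕ) then pz i y else y with hg
    have h1 : (fun s : Fin (m+1) => if (s : ℕ) < (t : ℕ) then pz i y else y)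
        = t.insertNth y g := by
      funext s
      rcases eq_or_ne s t with h | hne
      · rw [h, Fin.insertNth_apply_same]
        simp
      · obtain ⟨j', rfl⟩ := Fin.exists_succAbove_eq hne
        rw [Fin.insertNth_apply_succAbove, hg]
        simp only [succAbove_coe_lt]
    have h2 : (fun s : Fin (m+1) => if (s : ℕ) < (t : ℕ) + 1 then pz i y else y)
        = t.insertNth (pz i y) g := by
      funext s
      rcases eq_or_ne s t with h | hne
      · rw [h, Fin.insertNth_apply_same]
        simp
      · obtain ⟨j', rfl⟩ := Fin.exists_succAbove_eq hne
        rw [Fin.insertNth_apply_succAbove, hg]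
        simp only [succAbove_coe_lt_succ]
    have key : ∀ v : Fin N → ℂ,
        p (m+1) (t.insertNth v g)
          = p (m+1) (Function.update (t.insertNth y g) t v) := by
      intro v; rw [Fin.update_insertNth]
    have hsub : p (m+1) (t.insertNth y g) - p (m+1) (t.insertNth (pz i y) g)
        = p (m+1) (t.insertNth (y - pz i y) g) := by
      rw [key y, key (pz i y), key (y - pz i y)]
      exact ((p (m+1)).map_update_sub _ _ _ _).symm
    have hsmul : p (m+1) (t.insertNth (y i • ee i) g)
        = y i * p (m+1) (t.insertNth (ee i) g) := by
      rw [key (y i • ee i), key (ee i), (p (m+1)).map_update_smul, smul_eq_mul]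
    simp only [hc]
    rw [h1, h2]
    rw [← sub_pz i y] at hsmul
    rw [← hsub] at hsmul
    exact hsmul.symm
  calc y i * qm i p m (fun _ => y)
      = ∑ t : Fin (m+1), y i * p (m+1) (t.insertNth (ee i) fun j : Fin m =>
          if (j : ℕ) < (t : ℕ) then pz i y else y) := by
        rw [qm_apply, Finset.mul_sum]
    _ = ∑ t : Fin (m+1), (c (t : ℕ) - c ((t : ℕ) + 1)) :=
        Finset.sum_congr rfl (fun t _ => step t)
    _ = ∑ n ∈ Finset.range (m+1), (c n - c (n + 1)) :=
        Fin.sum_univ_eq_sum_range (fun n => c n - c (n+1)) (m+1)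
    _ = c 0 - c (m+1) := Finset.sum_range_sub' c (m+1)
    _ = _ := by rw [hc0, hcend]


lemma div_lemma (i : Fin N) (F : (Fin N → ℂ) → ℂ)
    (hF : AnalyticOnNhd ℂ F Set.univ) (h0 : ∀ z, F (Function.update z i 0) = 0) :
    ∃ H : (Fin N → ℂ) → ℂ, AnalyticOnNhd ℂ H Set.univ ∧ ∀ z, F z = z i * H z := by
  classical
  have hvan : ∀ z : Fin N → ℂ, z i = 0 → F z = 0 := by
    intro z hz
    have hupd : Function.update z i 0 = z := by
      funext j; by_cases h : j = i
      · subst h; simp [hz]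
      · simp [Function.update_apply, h]
    rw [← hupd]; exact h0 z
  refine ⟨fun z => if z i = 0 then deriv (fun w => F (Function.update z i w)) 0 else F z / z i,
    ?_, ?_⟩
  swap
  · intro z
    by_cases hz : z i = 0
    · simp [hz, hvan z hz]
    · show F z = z i * if z i = 0 then _ else F z / z i
      rw [if_neg hz]; field_simp
  intro c _
  by_cases hc : c i = 0
  swap
  · -- easy case: c i ≠ 0
    have hopen : IsOpen {z : Fin N → ℂ | z i ≠ 0} :=
      isOpen_ne.preimage (continuous_apply i)
    have hmem : {z : Fin N → ℂ | z i ≠ 0} ∈ nhds c := hopen.mem_nhds hc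
    have hdiv : AnalyticAt ℂ (fun z : Fin N → ℂ => F z / z i) c := by
      exact (hF c (Set.mem_univ c)).div
        ((ContinuousLinearMap.proj (R := ℂ) (φ := fun _ : Fin N => ℂ) i).analyticAt c) hc
    refine hdiv.congr ?_
    exact Filter.eventually_of_mem hmem (fun z hz => (if_neg hz).symm)
  · -- hard case: c i = 0
    obtain ⟨p, hp⟩ := hF c (Set.mem_univ c)
    obtain ⟨r, hpr⟩ := hp
    obtain ⟨r₀, hr₀pos, hr₀r⟩ := ENNReal.lt_iff_exists_nnreal_btwn.1 hpr.r_pos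
    have hr₀pos' : (0 : ℝ≥0) < r₀ := by exact_mod_cast hr₀pos
    have hr₀R : (0:ℝ) < (r₀ : ℝ) := hr₀pos'
    obtain ⟨C, hCpos, hC⟩ := p.norm_mul_pow_le_of_lt_radius (lt_of_lt_of_le hr₀r hpr.r_le)
    set Q : FormalMultilinearSeries ℂ (Fin N → ℂ) ℂ := qm i p with hQdef
    set ρ : ℝ≥0 := r₀ / 2 with hρdef
    have hρpos : (0 : ℝ≥0) < ρ := by
      rw [hρdef]; positivity
    have hρr₀ : ρ ≤ r₀ := by
      rw [hρdef]; exact half_le_self (by positivity)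
    have hρcoe : (ρ : ℝ) = (r₀ : ℝ) / 2 := by rw [hρdef]; push_cast; ring
    have hQr : (ρ : ℝ≥0∞) ≤ Q.radius := by
      refine Q.le_radius_of_bound (2 * C / (r₀ : ℝ)) fun m => ?_
      have h1 : ‖Q m‖ ≤ (m+1) * ‖p (m+1)‖ := qm_norm i p m
      have h2 : ‖p (m+1)‖ * (r₀ : ℝ)^(m+1) ≤ C := hC (m+1)
      have h3 : ((m:ℝ)+1) ≤ 2 * 2^m := by
        have := Nat.lt_two_pow_self (n := m+1)
        have h4 : (m:ℝ) + 1 ≤ (2:ℝ)^(m+1) := by exact_mod_cast this.le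
        rw [pow_succ] at h4
        linarith
      have hpnn : (0:ℝ) ≤ ‖p (m+1)‖ := norm_nonneg _
      calc ‖Q m‖ * (ρ:ℝ)^m
          ≤ ((m+1) * ‖p (m+1)‖) * (ρ:ℝ)^m := by
            exact mul_le_mul_of_nonneg_right h1 (by positivity)
        _ = (((m:ℝ)+1)/2^m) * (‖p (m+1)‖ * (r₀:ℝ)^m) := by
            rw [hρcoe, div_pow]; ring
        _ ≤ 2 * (‖p (m+1)‖ * (r₀:ℝ)^m) := by
            refine mul_le_mul_of_nonneg_right ?_ (by positivity)
            rw [div_le_iff₀ (by positivity)]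
            linarith
        _ = 2 * (‖p (m+1)‖ * (r₀:ℝ)^(m+1)) / (r₀:ℝ) := by
            field_simp
            ring
        _ ≤ 2 * C / (r₀:ℝ) := by gcongr
    set S : (Fin N → ℂ) → ℂ := fun z => Q.sum (z - c) with hSdef
    have hSball : HasFPowerSeriesOnBall S Q c ρ := by
      refine ⟨hQr, by exact_mod_cast hρpos, ?_⟩
      intro y hy
      have hsum := Q.hasSum (Metric.eball_subset_eball hQr hy)
      simpa [hSdef, add_sub_cancel_left] using hsum
    have hρler : (ρ : ℝ≥0∞) ≤ r := le_of_lt (lt_of_le_of_lt (by exact_mod_cast hρr₀) hr₀r)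
    have hid : ∀ y : Fin N → ℂ, y ∈ Metric.eball (0 : Fin N → ℂ) ρ →
        y i * Q.sum y = F (c + y) := by
      intro y hy
      have hyr : y ∈ Metric.eball (0 : Fin N → ℂ) r := Metric.eball_subset_eball hρler hy
      have hpzy : pz i y ∈ Metric.eball (0 : Fin N → ℂ) r := by
        rw [mem_emetric_ball_zero_iff] at hyr ⊢
        refine lt_of_le_of_lt ?_ hyr
        simp only [enorm_eq_nnnorm, ENNReal.coe_le_coe]
        exact_mod_cast norm_pz_le i y
      have h1 := hpr.hasSum hyr
      have h2 := hpr.hasSum hpzy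
      have hF2 : F (c + pz i y) = 0 := by
        refine hvan _ ?_
        simp [pz, hc]
      rw [hF2] at h2
      have h3 := h1.sub h2
      have h4 : HasSum (fun m => (p (m+1) fun _ => y) - (p (m+1) fun _ => pz i y))
          (F (c+y) - 0) := by
        have h03 : ((p 0 fun _ => y) - (p 0 fun _ => pz i y)) = 0 := by
          have he : (fun _ : Fin 0 => y) = (fun _ : Fin 0 => pz i y) :=
            funext fun x => x.elim0
          rw [he, sub_self]
        have := (hasSum_nat_add_iff'
          (f := fun n => (p n fun _ => y) - (p n fun _ => pz i y)) 1).2 h3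
        simpa [h03] using this
      have h5 := (Q.hasSum (Metric.eball_subset_eball hQr hy)).mul_left (y i)
      have h6 : (fun m => y i * (Q m fun _ => y))
          = fun m => (p (m+1) fun _ => y) - (p (m+1) fun _ => pz i y) :=
        funext fun m => qm_diag i p m y
      rw [h6] at h5
      simpa using h5.unique h4
    have hρ0 : (0 : ℝ≥0∞) < (ρ : ℝ≥0∞) := by exact_mod_cast hρpos
    have hball_mem : Metric.eball c (ρ : ℝ≥0∞) ∈ nhds c := Metric.eball_mem_nhds c hρ0
    refine AnalyticAt.congr (f := S) (hSball.analyticOnNhd c (Metric.mem_eball_self hρ0)) ?_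
    have hidz : ∀ z : Fin N → ℂ, z ∈ Metric.eball c (ρ : ℝ≥0∞) → z i * S z = F z := by
      intro z hz
      have hy : z - c ∈ Metric.eball (0 : Fin N → ℂ) ρ := by
        rw [mem_emetric_ball_zero_iff]
        rw [Metric.mem_eball, edist_eq_enorm_sub] at hz
        exact_mod_cast hz
      have := hid (z - c) hy
      rw [add_sub_cancel] at this
      have hzi : (z - c) i = z i := by simp [hc]
      rw [hzi] at this
      exact this
    filter_upwards [hball_mem] with z hz
    have hzE := hz
    by_cases hzi : z i = 0
    · show S z = if z i = 0 then deriv (fun w => F (Function.update z i w)) 0 else F z / z i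
      rw [if_pos hzi]
      have hzz : pz i z = z := by
        funext j; by_cases h : j = i
        · subst h; simp [pz, hzi]
        · simp [pz, Function.update_apply, h]
      rw [Metric.eball_coe] at hz
      set ε : ℝ := (ρ : ℝ) - dist z c with hε
      have hεpos : 0 < ε := by
        rw [hε]; simp only [sub_pos]; exact hz
      have hupd : ∀ w : ℂ, Function.update z i w = z + w • ee i := by
        intro w
        rw [update_eq_pz_add, hzz]
      have hupdball : ∀ w : ℂ, ‖w‖ < ε → Function.update z i w ∈ Metric.ball c (ρ:ℝ) := by
        intro w hw
        rw [Metric.mem_ball, dist_eq_norm, hupd w]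
        have h2 : z + w • ee i - c = (z - c) + w • ee i := by abel
        rw [h2]
        have h3 : ‖(z - c) + w • ee i‖ ≤ ‖z - c‖ + ‖w‖ := by
          refine (norm_add_le _ _).trans ?_
          have : ‖w • ee i‖ ≤ ‖w‖ := by
            rw [norm_smul]
            calc ‖w‖ * ‖ee i‖ ≤ ‖w‖ * 1 :=
              mul_le_mul_of_nonneg_left (norm_ee_le i) (norm_nonneg w)
            _ = ‖w‖ := mul_one _
          linarith
        have h4 : ‖z - c‖ = dist z c := (dist_eq_norm z c).symm
        rw [hε] at hw
        linarith
      have hslice : ∀ w : ℂ, ‖w‖ < ε →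
          F (Function.update z i w) = w * S (Function.update z i w) := by
        intro w hw
        have hmem := hupdball w hw
        rw [← Metric.eball_coe] at hmem
        have hthis := hidz _ hmem
        rw [Function.update_self] at hthis
        exact hthis.symm
      have hSan : AnalyticAt ℂ S z := hSball.analyticOnNhd z hzE
      have hψ : HasDerivAt (fun w : ℂ => S (z + w • ee i)) (fderiv ℂ S z (ee i)) 0 := by
        have hdS : HasFDerivAt S (fderiv ℂ S z) z := hSan.differentiableAt.hasFDerivAt
        have hin : HasDerivAt (fun w : ℂ => z + w • ee i) (ee i) 0 := by
          have h := ((hasDerivAt_id (0:ℂ)).smul_const (ee i)).const_add z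
          simpa using h
        have hcomp := hdS.comp_hasDerivAt_of_eq 0 hin (by simp)
        exact hcomp
      have hg : HasDerivAt (fun w : ℂ => F (Function.update z i w)) (S z) 0 := by
        have hprod := (hasDerivAt_id (0:ℂ)).mul hψ
        have heq : (fun w : ℂ => F (Function.update z i w))
            =ᶠ[nhds (0:ℂ)] (fun w => id w * S (z + w • ee i)) := by
          filter_upwards [Metric.ball_mem_nhds (0:ℂ) hεpos] with w hw
          rw [mem_ball_zero_iff] at hw
          rw [hslice w hw, hupd w]
          rfl
        have hval : (1 : ℂ) * S (z + (0:ℂ) • ee i) + id (0:ℂ) * (fderiv ℂ S z (ee i)) = S z := by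
          simp
        rw [hval] at hprod
        exact hprod.congr_of_eventuallyEq heq
      exact (hg.deriv).symm
    · show S z = if z i = 0 then deriv (fun w => F (Function.update z i w)) 0 else F z / z i
      rw [if_neg hzi]
      have hth := hidz z hz
      field_simp
      linear_combination hth


/-- zeroing-out map as a continuous linear map -/
noncomputable def pzL (i : Fin N) : (Fin N → ℂ) →L[ℂ] (Fin N → ℂ) :=
  ContinuousLinearMap.id ℂ (Fin N → ℂ)
    - (ContinuousLinearMap.proj (R := ℂ) (φ := fun _ : Fin N => ℂ) i).smulRight (ee i)

lemma pzL_apply (i : Fin N) (z : Fin N → ℂ) : pzL i z = Function.update z i 0 := by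
  funext j
  by_cases h : j = i
  · subst h
    simp [pzL, ee]
  · simp [pzL, ee, Function.update_apply, h, Pi.single_apply]

lemma iter (T : Finset (Fin N)) (F : (Fin N → ℂ) → ℂ)
    (hF : AnalyticOnNhd ℂ F Set.univ)
    (hvan : ∀ z : Fin N → ℂ, F (fun j => if j ∈ T then 0 else z j) = 0) :
    ∃ g : Fin N → ((Fin N → ℂ) → ℂ), (∀ l, AnalyticOnNhd ℂ (g l) Set.univ) ∧
      ∀ z : Fin N → ℂ, F z = ∑ l ∈ T, z l * g l z := by
  classical
  induction T using Finset.induction_on generalizing F with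
  | empty =>
    refine ⟨fun _ => 0, fun l => analyticOnNhd_const, fun z => ?_⟩
    have := hvan z
    simpa using this
  | @insert a T' ha ih =>
    have hF2anal : AnalyticOnNhd ℂ (fun z => F (Function.update z a 0)) Set.univ := by
      intro x _
      have h1 : AnalyticAt ℂ (pzL a) x := (pzL a).analyticAt x
      have h2 : AnalyticAt ℂ F (pzL a x) := hF _ (Set.mem_univ _)
      have := h2.comp h1
      refine this.congr ?_
      filter_upwards with w
      simp [pzL_apply]
    have hGanal : AnalyticOnNhd ℂ (fun z => F z - F (Function.update z a 0)) Set.univ :=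
      fun x hx => (hF x hx).sub (hF2anal x hx)
    have hG0 : ∀ z, (fun z => F z - F (Function.update z a 0)) (Function.update z a 0) = 0 := by
      intro z
      simp [Function.update_idem]
    obtain ⟨h, hhanal, hGh⟩ := div_lemma a _ hGanal hG0
    have hvan2 : ∀ z : Fin N → ℂ,
        (fun z => F (Function.update z a 0)) (fun j => if j ∈ T' then 0 else z j) = 0 := by
      intro z
      have hkey : Function.update (fun j => if j ∈ T' then 0 else z j) a (0:ℂ)
          = fun j => if j ∈ insert a T' then 0 else z j := by
        funext j
        by_cases hj : j = a
        · subst hj; simp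
        · simp [Function.update_apply, hj, Finset.mem_insert]
      simp only [hkey]
      exact hvan z
    obtain ⟨g, hganal, hgdec⟩ := ih _ hF2anal hvan2
    refine ⟨Function.update g a h, ?_, ?_⟩
    · intro l
      by_cases hl : l = a
      · subst hl; simpa using hhanal
      · simpa [Function.update_of_ne hl] using hganal l
    · intro z
      have hFz : F z = z a * h z + F (Function.update z a 0) := by
        have := hGh z
        linear_combination this
      rw [hFz, Finset.sum_insert ha, Function.update_self]
      congr 1
      · rw [hgdec z]
        refine Finset.sum_congr rfl fun l hl => ?_
        have hla : l ≠ a := fun hc => ha (hc ▸ hl)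
        rw [Function.update_of_ne hla]

end Stmt5Aux


/-- Theorem DAk for the trivial bundle over ℂᴺ: given entire functions
s_{j,B'} indexed by j ∈ A and (k−1)-element subsets B' ⊆ A∖{j} satisfying the S_{A,k}
relation, there exist entire functions s'_{i,B} realizing each sum Σ_{j∈B} s_{j,B∖{j}}
as Σ_{i∈A∖B} z_i s'_{i,B}. -/
theorem stmt_5 (N : ℕ) (A : Finset (Fin N)) (k : ℕ) (hk1 : 1 ≤ k) (hk2 : k ≤ A.card)
    (s : Fin N → Finset (Fin N) → ((Fin N → ℂ) → ℂ))
    (hs : ∀ j ∈ A, ∀ B' ∈ (A.erase j).powersetCard (k - 1),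
      AnalyticOnNhd ℂ (s j B') Set.univ)
    (heq : ∀ z : Fin N → ℂ,
      ∑ B ∈ A.powersetCard k, (∏ l ∈ B, z l) * (∑ j ∈ B, s j (B.erase j) z) = 0) :
    ∃ s' : Fin N → Finset (Fin N) → ((Fin N → ℂ) → ℂ),
      (∀ i ∈ A, ∀ B ∈ (A.erase i).powersetCard k,
        AnalyticOnNhd ℂ (s' i B) Set.univ) ∧
      ∀ B ∈ A.powersetCard k, ∀ z : Fin N → ℂ,
        ∑ j ∈ B, s j (B.erase j) z = ∑ i ∈ A \ B, z i * s' i B z := by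
  classical
  have hsmem : ∀ B ∈ A.powersetCard k, ∀ j ∈ B,
      j ∈ A ∧ B.erase j ∈ (A.erase j).powersetCard (k-1) := by
    intro B hB j hj
    obtain ⟨hBA, hBcard⟩ := Finset.mem_powersetCard.1 hB
    refine ⟨hBA hj, Finset.mem_powersetCard.2 ⟨Finset.erase_subset_erase j hBA, ?_⟩⟩
    rw [Finset.card_erase_of_mem hj, hBcard]
  have fanal : ∀ B ∈ A.powersetCard k,
      AnalyticOnNhd ℂ (fun z => ∑ j ∈ B, s j (B.erase j) z) Set.univ := by
    intro B hB x _
    refine Finset.analyticAt_fun_sum B fun j hj => ?_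
    obtain ⟨hjA, hmem⟩ := hsmem B hB j hj
    exact hs j hjA _ hmem x (Set.mem_univ x)
  have hvanB : ∀ B ∈ A.powersetCard k, ∀ z : Fin N → ℂ,
      (∑ j ∈ B, s j (B.erase j) (fun l => if l ∈ A \ B then 0 else z l)) = 0 := by
    intro B hB z
    obtain ⟨hBA, hBcard⟩ := Finset.mem_powersetCard.1 hB
    set u : ℂ → (Fin N → ℂ) :=
      fun t l => if l ∈ A \ B then 0 else z l + (if l ∈ B then t else 0) with hu
    have hkey : ∀ t : ℂ, (∏ l ∈ B, (z l + t)) * (∑ j ∈ B, s j (B.erase j) (u t)) = 0 := by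
      intro t
      have h1 := heq (u t)
      have h2 : ∑ B' ∈ A.powersetCard k, (∏ l ∈ B', u t l) * (∑ j ∈ B', s j (B'.erase j) (u t))
          = (∏ l ∈ B, u t l) * (∑ j ∈ B, s j (B.erase j) (u t)) := by
        refine Finset.sum_eq_single B (fun B' hB' hne => ?_) (fun hnot => absurd hB hnot)
        obtain ⟨hB'A, hB'card⟩ := Finset.mem_powersetCard.1 hB'
        have hex : ∃ l ∈ B', l ∉ B := by
          by_contra hcon
          push_neg at hcon
          exact hne (Finset.eq_of_subset_of_card_le hcon (by rw [hB'card, hBcard]))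
        obtain ⟨l, hl, hlB⟩ := hex
        have : u t l = 0 := by simp [hu, Finset.mem_sdiff, hB'A hl, hlB]
        rw [Finset.prod_eq_zero hl this, zero_mul]
      have h3 : (∏ l ∈ B, u t l) = ∏ l ∈ B, (z l + t) := by
        refine Finset.prod_congr rfl fun l hl => ?_
        simp [hu, Finset.mem_sdiff, hl]
      rw [h2, h3] at h1
      exact h1
    have hucont : Continuous u := by
      have hform : u = fun t => (fun l => if l ∈ A \ B then 0 else z l)
          + t • (fun l => if l ∈ A \ B then (0:ℂ) else if l ∈ B then 1 else 0) := by
        funext t l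
        simp only [hu, Pi.add_apply, Pi.smul_apply, smul_eq_mul, Finset.mem_sdiff]
        by_cases h1 : l ∈ A ∧ l ∉ B
        · simp [h1]
        · by_cases h2 : l ∈ B <;> simp [h1, h2]
      rw [hform]
      exact continuous_const.add (continuous_id.smul continuous_const)
    have hφcont : ContinuousAt (fun t => ∑ j ∈ B, s j (B.erase j) (u t)) 0 := by
      refine tendsto_finset_sum B fun j hj => ?_
      obtain ⟨hjA, hmem⟩ := hsmem B hB j hj
      exact ((hs j hjA _ hmem (u 0) (Set.mem_univ _)).continuousAt).comp hucont.continuousAt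
    set Bne := B.filter (fun l => z l ≠ 0) with hBne
    set ε : ℝ := if hne : Bne.Nonempty then Bne.inf' hne (fun l => ‖z l‖) else 1
      with hε
    have hεpos : 0 < ε := by
      rw [hε]
      split
      · rename_i hne
        rw [Finset.lt_inf'_iff]
        intro l hl
        have hzl := (Finset.mem_filter.1 hl).2
        exact norm_pos_iff.2 hzl
      · exact one_pos
    have hεle : ∀ l ∈ B, z l ≠ 0 → ε ≤ ‖z l‖ := by
      intro l hl hzl
      have hlBne : l ∈ Bne := Finset.mem_filter.2 ⟨hl, hzl⟩
      rw [hε, dif_pos ⟨l, hlBne⟩]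
      exact Finset.inf'_le _ hlBne
    have hres : ∀ t : ℂ, t ≠ 0 → ‖t‖ < ε →
        (∑ j ∈ B, s j (B.erase j) (u t)) = 0 := by
      intro t ht hlt
      have hprodne : (∏ l ∈ B, (z l + t)) ≠ 0 := by
        refine Finset.prod_ne_zero_iff.2 fun l hl => ?_
        by_cases hzl : z l = 0
        · simpa [hzl] using ht
        · intro hcon
          have htl : t = - z l := by linear_combination hcon
          have h1 : ‖t‖ = ‖z l‖ := by rw [htl, norm_neg]
          have h2 := hεle l hl hzl
          rw [h1] at hlt
          linarith
      rcases mul_eq_zero.1 (hkey t) with h | h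
      · exact absurd h hprodne
      · exact h
    have hev : (fun t => ∑ j ∈ B, s j (B.erase j) (u t)) =ᶠ[nhdsWithin (0:ℂ) {(0:ℂ)}ᶜ]
        (fun _ => 0) := by
      have h1 : Metric.ball (0:ℂ) ε ∈ nhdsWithin (0:ℂ) {(0:ℂ)}ᶜ :=
        nhdsWithin_le_nhds (Metric.ball_mem_nhds (0:ℂ) hεpos)
      filter_upwards [h1, self_mem_nhdsWithin] with t ht ht0
      rw [mem_ball_zero_iff] at ht
      exact hres t ht0 (by simpa using ht)
    have htend : Filter.Tendsto (fun t => ∑ j ∈ B, s j (B.erase j) (u t))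
        (nhdsWithin (0:ℂ) {(0:ℂ)}ᶜ) (nhds (∑ j ∈ B, s j (B.erase j) (u 0))) :=
      hφcont.continuousWithinAt
    have h2 : Filter.Tendsto (fun t => ∑ j ∈ B, s j (B.erase j) (u t))
        (nhdsWithin (0:ℂ) {(0:ℂ)}ᶜ) (nhds 0) := by
      rw [Filter.tendsto_congr' hev]
      exact tendsto_const_nhds
    have huniq := tendsto_nhds_unique htend h2
    have hu0 : u 0 = fun l => if l ∈ A \ B then 0 else z l := by
      funext l
      simp only [hu, Finset.mem_sdiff]
      by_cases h1 : l ∈ A ∧ l ∉ B <;> simp [h1]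
    rw [hu0] at huniq
    exact huniq
  have key : ∀ B : Finset (Fin N), ∃ g : Fin N → ((Fin N → ℂ) → ℂ),
      (∀ l, AnalyticOnNhd ℂ (g l) Set.univ) ∧
      (B ∈ A.powersetCard k → ∀ z : Fin N → ℂ,
        (∑ j ∈ B, s j (B.erase j) z) = ∑ l ∈ A \ B, z l * g l z) := by
    intro B
    by_cases hB : B ∈ A.powersetCard k
    · obtain ⟨g, hganal, hgdec⟩ := Stmt5Aux.iter (A \ B)
        (fun z => ∑ j ∈ B, s j (B.erase j) z) (fanal B hB) (fun z => hvanB B hB z)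
      exact ⟨g, hganal, fun _ z => hgdec z⟩
    · exact ⟨fun _ => 0, fun _ => analyticOnNhd_const, fun h => absurd h hB⟩
  choose g hg1 hg2 using key
  exact ⟨fun l B => g B l, fun i _ B _ => hg1 B i, fun B hB z => hg2 B hB z⟩
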